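/- arXiv:2102.02756 — 4 statements merged into one kernel-verified Lean document; each statement's English description precedes it below -/
import Mathlib

section
/- Under the initialization condition, the population coefficient update M_U(S) satisfies ‖M_U(S) M_U(S)ᵀ − D_S*‖ ≤ (1 − η σ_r) ‖S Sᵀ − D_S*‖ + 3η ‖S Tᵀ‖². -/
open Matrix
open scoped Matrix.Norms.L2Operator

lemma diag_norm_le {n : ℕ} (v : Fin n → ℝ) (c : ℝ) (hc : 0 ≤ c)
    (h : ∀ i, |v i| ≤ c) : ‖Matrix.diagonal v‖ ≤ c := by
  rw [Matrix.l2_opNorm_def]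
  apply ContinuousLinearMap.opNorm_le_bound _ hc
  intro x
  simp only [LinearEquiv.trans_apply, LinearEquiv.coe_coe]
  rw [EuclideanSpace.norm_eq, EuclideanSpace.norm_eq]
  rw [← Real.sqrt_sq hc, ← Real.sqrt_mul (by positivity)]
  apply Real.sqrt_le_sqrt
  rw [Finset.mul_sum]
  apply Finset.sum_le_sum
  intro i _
  have hx : (LinearMap.toContinuousLinearMap (toEuclideanLin (diagonal v))) x i
      = v i * x i := by
    show (diagonal v *ᵥ x) i = v i * x i
    simp [Matrix.mulVec_diagonal]
  rw [hx, Real.norm_eq_abs, Real.norm_eq_abs, abs_mul, mul_pow]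
  have h2 : |v i| ^ 2 ≤ c ^ 2 := by nlinarith [abs_nonneg (v i), h i]
  nlinarith [sq_nonneg (|x i|), abs_nonneg (x i)]

lemma tnorm {m n : ℕ} (X : Matrix (Fin m) (Fin n) ℝ) : ‖Xᵀ‖ = ‖X‖ := by
  rw [← Matrix.conjTranspose_eq_transpose_of_trivial, Matrix.l2_opNorm_conjTranspose]

lemma mul_t_norm {m n : ℕ} (X : Matrix (Fin m) (Fin n) ℝ) : ‖X * Xᵀ‖ = ‖X‖ * ‖X‖ := by
  have h := Matrix.l2_opNorm_conjTranspose_mul_self (Xᵀ)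
  rw [Matrix.conjTranspose_eq_transpose_of_trivial, Matrix.transpose_transpose, tnorm] at h
  exact h

set_option maxHeartbeats 1000000 in
lemma stmt3_arith (σr σ1 η b e p s t : ℝ) (hσr : 0 < σr) (hσ1 : 0 < σ1)
    (hσrσ1 : σr ≤ σ1) (hη : η = 1 / (100 * σ1)) (hb : b = (11/10) * σ1)
    (he0 : 0 ≤ e) (hp0 : 0 ≤ p) (hs0 : 0 ≤ s) (ht0 : 0 ≤ t)
    (hnE : e ≤ 0.1 * σr) (hnS : s * s ≤ σ1 + 0.1 * σr) (hnT : t * t ≤ 0.1 * σr) :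
    (1 - 2*η*b) * e + η * (2 * ((b - σr + e) * e)) + (2*η) * (p*p)
      + η^2 * ((e*s + p*t)^2) ≤ (1 - η*σr) * e + 3*η * p^2 := by
  have hne : σ1 ≠ 0 := ne_of_gt hσ1
  have hηpos : 0 < η := by rw [hη]; positivity
  have step1 : η * ((e*s + p*t)^2) ≤ 0.022 * e^2 + 0.002 * p^2 := by
    have h1 : (e*s + p*t)^2 ≤ 2 * (e^2 * (s*s)) + 2 * (p^2 * (t*t)) := by
      nlinarith [sq_nonneg (e*s - p*t)]
    have h2 : η * (2 * (e^2 * (s*s))) ≤ 0.022 * e^2 := by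
      have hx : 2 * (e^2 * (s*s)) ≤ 2.2 * σ1 * e^2 := by nlinarith [sq_nonneg e]
      have h3 : η * (2.2 * σ1 * e^2) = 0.022 * e^2 := by
        rw [hη]; field_simp; ring
      nlinarith
    have h4 : η * (2 * (p^2 * (t*t))) ≤ 0.002 * p^2 := by
      have hx : 2 * (p^2 * (t*t)) ≤ 0.2 * σ1 * p^2 := by nlinarith [sq_nonneg p]
      have h5 : η * (0.2 * σ1 * p^2) = 0.002 * p^2 := by
        rw [hη]; field_simp; ring
      nlinarith
    nlinarith [sq_nonneg (e*s + p*t)]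
  have expand : (1 - 2*η*b) * e + η * (2 * ((b - σr + e) * e)) + (2*η) * (p*p)
      = e - 2*η*σr*e + 2*η*e^2 + 2*η*p^2 := by rw [hb]; ring
  rw [expand]
  have hq : η^2 * ((e*s+p*t)^2) = η * (η * ((e*s+p*t)^2)) := by ring
  rw [hq]
  have s2 : η * (η * ((e*s+p*t)^2)) ≤ η * (0.022 * e^2 + 0.002 * p^2) :=
    mul_le_mul_of_nonneg_left step1 (le_of_lt hηpos)
  have h6 : 2*e^2 + 0.022*e^2 ≤ σr * e := by
    nlinarith [mul_le_mul_of_nonneg_right hnE he0, mul_nonneg (le_of_lt hσr) he0, sq_nonneg e]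
  have h7 : (0.002 : ℝ) * p^2 ≤ p^2 := by nlinarith [sq_nonneg p]
  nlinarith

set_option maxHeartbeats 1000000 in
theorem stmt_3
    (d k r : ℕ) (hd : 0 < d) (hr : 0 < r) (hrk : r ≤ k) (hkd : k ≤ d)
    (U : Matrix (Fin d) (Fin r) ℝ) (V : Matrix (Fin d) (Fin (d - r)) ℝ)
    (hU : Uᵀ * U = 1) (hV : Vᵀ * V = 1) (hUV : Uᵀ * V = 0)
    (hUVc : U * Uᵀ + V * Vᵀ = 1)
    (σr σ1 : ℝ) (hσr : 0 < σr)
    (DS : Matrix (Fin r) (Fin r) ℝ) (hDS : DS.IsDiag)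
    (hDSlb : ∀ i, σr ≤ DS i i) (hDSub : ∀ i, DS i i ≤ σ1)
    (DT : Matrix (Fin (d - r)) (Fin (d - r)) ℝ) (hDT : DT.IsDiag)
    (hDTnn : ∀ i, 0 ≤ DT i i)
    (η : ℝ) (hη : η = 1 / (100 * σ1))
    (F : Matrix (Fin d) (Fin k) ℝ)
    (S : Matrix (Fin r) (Fin k) ℝ) (hS : S = Uᵀ * F)
    (T : Matrix (Fin (d - r)) (Fin k) ℝ) (hT : T = Vᵀ * F)
    (MU : Matrix (Fin r) (Fin k) ℝ)
    (hMU : MU = S - η • (S * Sᵀ * S + S * Tᵀ * T - DS * S))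
    (MV : Matrix (Fin (d - r)) (Fin k) ℝ)
    (hMV : MV = T - η • (T * Tᵀ * T + T * Sᵀ * S - DT * T))
    (hinit1 : ‖S * Sᵀ - DS‖ ≤ 0.1 * σr) (hinit2 : ‖T * Tᵀ‖ ≤ 0.1 * σr)
    (hinit3 : ‖S * Tᵀ‖ ≤ 0.1 * σr) (hinitDT : ‖DT‖ ≤ 0.001 * σr) :
    ‖MU * MUᵀ - DS‖ ≤ (1 - η * σr) * ‖S * Sᵀ - DS‖ + 3 * η * ‖S * Tᵀ‖ ^ 2 := by
  have i0 : Fin r := ⟨0, hr⟩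
  have hσ1 : 0 < σ1 := lt_of_lt_of_le hσr (le_trans (hDSlb i0) (hDSub i0))
  have hσrσ1 : σr ≤ σ1 := le_trans (hDSlb i0) (hDSub i0)
  have hηpos : 0 < η := by rw [hη]; positivity
  -- names
  obtain ⟨E, hE⟩ : ∃ X : Matrix (Fin r) (Fin r) ℝ, X = S * Sᵀ - DS := ⟨_, rfl⟩
  obtain ⟨P, hP⟩ : ∃ X : Matrix (Fin r) (Fin (d - r)) ℝ, X = S * Tᵀ := ⟨_, rfl⟩
  obtain ⟨b, hb⟩ : ∃ x : ℝ, x = (11/10) * σ1 := ⟨_, rfl⟩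
  obtain ⟨G, hG⟩ : ∃ X : Matrix (Fin r) (Fin k) ℝ, X = E * S + P * T := ⟨_, rfl⟩
  obtain ⟨B, hB⟩ : ∃ X : Matrix (Fin r) (Fin r) ℝ,
      X = b • (1 : Matrix (Fin r) (Fin r) ℝ) - (S * Sᵀ) := ⟨_, rfl⟩
  rw [← hE] at hinit1 ⊢
  rw [← hP] at hinit3 ⊢
  -- DS is symmetric
  have hDSt : DSᵀ = DS := by
    ext i j
    rcases eq_or_ne i j with h | h
    · subst h; simp
    · rw [Matrix.transpose_apply, hDS h, hDS h.symm]
  have hEt : Eᵀ = E := by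
    rw [hE, Matrix.transpose_sub, Matrix.transpose_mul, Matrix.transpose_transpose, hDSt]
  -- MU rewritten
  have hMU' : MU = S - η • G := by
    rw [hMU, hG, hE, hP]
    congr 1
    congr 1
    rw [Matrix.sub_mul]
    abel
  have hGt : Gᵀ = Sᵀ * E + Tᵀ * Pᵀ := by
    rw [hG, Matrix.transpose_add, Matrix.transpose_mul, Matrix.transpose_mul, hEt]
  -- the key algebraic identity
  have hid : MU * MUᵀ - DS
      = (1 - 2*η*b) • E + η • (B * E + E * B) - (2*η) • (P * Pᵀ) + (η^2) • (G * Gᵀ) := by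
    rw [hMU', Matrix.transpose_sub, Matrix.transpose_smul, hGt]
    have hSG : S * (Sᵀ * E + Tᵀ * Pᵀ) = (S * Sᵀ) * E + P * Pᵀ := by
      rw [Matrix.mul_add, hP, Matrix.mul_assoc, Matrix.mul_assoc]
    have hGS : G * Sᵀ = E * (S * Sᵀ) + P * Pᵀ := by
      rw [hG, Matrix.add_mul, Matrix.mul_assoc, Matrix.mul_assoc, hP, Matrix.transpose_mul,
        Matrix.transpose_transpose]
    have expand : (S - η • G) * (Sᵀ - η • (Sᵀ * E + Tᵀ * Pᵀ))
        = S * Sᵀ - η • (S * (Sᵀ * E + Tᵀ * Pᵀ)) - η • (G * Sᵀ)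
          + (η^2) • (G * (Sᵀ * E + Tᵀ * Pᵀ)) := by
      rw [Matrix.sub_mul, Matrix.mul_sub, Matrix.mul_sub, Matrix.smul_mul, Matrix.mul_smul,
        Matrix.smul_mul, Matrix.mul_smul, smul_smul]
      module
    rw [expand, hSG, hGS, hB]
    have h1 : (b • (1 : Matrix (Fin r) (Fin r) ℝ) - S * Sᵀ) * E = b • E - (S * Sᵀ) * E := by
      rw [Matrix.sub_mul, Matrix.smul_mul, Matrix.one_mul]
    have h2 : E * (b • (1 : Matrix (Fin r) (Fin r) ℝ) - S * Sᵀ) = b • E - E * (S * Sᵀ) := by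
      rw [Matrix.mul_sub, Matrix.mul_smul, Matrix.mul_one]
    rw [h1, h2, hE]
    module
  -- norm facts
  have hnE : ‖E‖ ≤ 0.1 * σr := hinit1
  have hBd : b • (1 : Matrix (Fin r) (Fin r) ℝ) - DS = diagonal (fun i => b - DS i i) := by
    ext i j
    rcases eq_or_ne i j with h | h
    · subst h; simp [Matrix.one_apply]
    · simp [Matrix.diagonal_apply_ne _ h, hDS h, Matrix.one_apply_ne h]
  have hnB : ‖B‖ ≤ b - σr + ‖E‖ := by
    have hsplit : B = (b • (1 : Matrix (Fin r) (Fin r) ℝ) - DS) - E := by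
      rw [hB, hE]; abel
    rw [hsplit]
    refine le_trans (norm_sub_le _ _) ?_
    gcongr
    rw [hBd]
    apply diag_norm_le
    · rw [hb]; linarith
    · intro i
      rw [abs_le, hb]
      constructor
      · linarith [hDSub i]
      · linarith [hDSlb i]
  have hnS : ‖S‖ * ‖S‖ ≤ σ1 + 0.1 * σr := by
    rw [← mul_t_norm]
    have hss : S * Sᵀ = E + DS := by rw [hE]; abel
    rw [hss]
    refine le_trans (norm_add_le _ _) ?_
    have hDSnorm : ‖DS‖ ≤ σ1 := by
      rw [← hDS.diagonal_diag]
      apply diag_norm_le _ _ (le_of_lt hσ1)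
      intro i
      rw [Matrix.diag_apply, abs_le]
      exact ⟨by linarith [hDSlb i], hDSub i⟩
    linarith
  have hnT : ‖T‖ * ‖T‖ ≤ 0.1 * σr := by rw [← mul_t_norm]; exact hinit2
  have hnG : ‖G‖ ≤ ‖E‖ * ‖S‖ + ‖P‖ * ‖T‖ := by
    rw [hG]
    refine le_trans (norm_add_le _ _) ?_
    exact add_le_add (Matrix.l2_opNorm_mul E S) (Matrix.l2_opNorm_mul P T)
  have hne : σ1 ≠ 0 := ne_of_gt hσ1
  have hc0 : (1 : ℝ) - 2*η*b = 489/500 := by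
    rw [hη, hb]; field_simp; ring
  -- main norm bound
  have key : ‖MU * MUᵀ - DS‖
      ≤ (1 - 2*η*b) * ‖E‖ + η * (2 * ((b - σr + ‖E‖) * ‖E‖)) + (2*η) * (‖P‖ * ‖P‖)
        + η^2 * (‖G‖ * ‖G‖) := by
    rw [hid]
    refine le_trans (norm_add_le _ _) ?_
    refine add_le_add (le_trans (norm_sub_le _ _) ?_) ?_
    · refine add_le_add (le_trans (norm_add_le _ _) (add_le_add ?_ ?_)) ?_
      · rw [norm_smul, Real.norm_eq_abs, hc0, abs_of_nonneg (by norm_num : (0:ℝ) ≤ 489/500)]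
      · rw [norm_smul, Real.norm_eq_abs, abs_of_pos hηpos]
        have h1 : ‖B * E + E * B‖ ≤ 2 * ((b - σr + ‖E‖) * ‖E‖) := by
          refine le_trans (norm_add_le _ _) ?_
          have e1 : ‖B * E‖ ≤ (b - σr + ‖E‖) * ‖E‖ := by
            refine le_trans (Matrix.l2_opNorm_mul B E) ?_
            gcongr
          have e2 : ‖E * B‖ ≤ (b - σr + ‖E‖) * ‖E‖ := by
            refine le_trans (Matrix.l2_opNorm_mul E B) ?_
            rw [mul_comm]
            gcongr
          linarith
        exact mul_le_mul_of_nonneg_left h1 (le_of_lt hηpos)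
      · rw [norm_smul, Real.norm_eq_abs, abs_of_pos (by linarith), mul_t_norm]
    · rw [norm_smul, Real.norm_eq_abs, abs_of_pos (by positivity), mul_t_norm]
  -- bound ‖G‖ * ‖G‖
  have hG2 : ‖G‖ * ‖G‖ ≤ (‖E‖ * ‖S‖ + ‖P‖ * ‖T‖)^2 := by
    have h0 : (0:ℝ) ≤ ‖E‖ * ‖S‖ + ‖P‖ * ‖T‖ :=
      add_nonneg (mul_nonneg (norm_nonneg _) (norm_nonneg _))
        (mul_nonneg (norm_nonneg _) (norm_nonneg _))
    calc ‖G‖ * ‖G‖ ≤ (‖E‖ * ‖S‖ + ‖P‖ * ‖T‖) * (‖E‖ * ‖S‖ + ‖P‖ * ‖T‖) :=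
          mul_le_mul hnG hnG (norm_nonneg G) h0
      _ = (‖E‖ * ‖S‖ + ‖P‖ * ‖T‖)^2 := (pow_two _).symm
  calc ‖MU * MUᵀ - DS‖
      ≤ (1 - 2*η*b) * ‖E‖ + η * (2 * ((b - σr + ‖E‖) * ‖E‖)) + (2*η) * (‖P‖ * ‖P‖)
        + η^2 * (‖G‖ * ‖G‖) := key
    _ ≤ (1 - 2*η*b) * ‖E‖ + η * (2 * ((b - σr + ‖E‖) * ‖E‖)) + (2*η) * (‖P‖ * ‖P‖)
        + η^2 * ((‖E‖ * ‖S‖ + ‖P‖ * ‖T‖)^2) := by gcongr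
    _ ≤ (1 - η*σr) * ‖E‖ + 3*η * ‖P‖^2 :=
          stmt3_arith σr σ1 η b ‖E‖ ‖P‖ ‖S‖ ‖T‖ hσr hσ1 hσrσ1 hη hb (norm_nonneg E)
            (norm_nonneg P) (norm_nonneg S) (norm_nonneg T) hnE hnS hnT
end

section
/- Under the initialization condition, the non-expansion bound ‖S M_V(T)ᵀ‖ ≤ ‖S Tᵀ‖ holds. -/
open Matrix
open scoped Matrix.Norms.L2Operator

set_option maxHeartbeats 1000000

lemma my_diag_opNorm_le {n : ℕ} (D : Matrix (Fin n) (Fin n) ℝ) (hD : D.IsDiag)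
    (c : ℝ) (hc : 0 ≤ c) (h : ∀ i, |D i i| ≤ c) : ‖D‖ ≤ c := by
  rw [Matrix.l2_opNorm_def]
  refine ContinuousLinearMap.opNorm_le_bound _ hc fun x => ?_
  have happ : ∀ i, (toEuclideanLin (𝕜 := ℝ) D x) i = D i i * x i := by
    intro i
    show (D *ᵥ (WithLp.equiv 2 (Fin n → ℝ) x)) i = D i i * x i
    simp only [Matrix.mulVec, dotProduct]
    rw [Finset.sum_eq_single i]
    · rfl
    · intro j _ hj
      rw [hD (Ne.symm hj), zero_mul]
    · intro hmem
      exact absurd (Finset.mem_univ i) hmem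
  simp only [LinearEquiv.trans_apply, LinearMap.coe_toContinuousLinearMap']
  rw [EuclideanSpace.norm_eq, EuclideanSpace.norm_eq, ← Real.sqrt_sq hc,
    ← Real.sqrt_mul (by positivity)]
  apply Real.sqrt_le_sqrt
  rw [Finset.mul_sum]
  refine Finset.sum_le_sum fun i _ => ?_
  rw [happ]
  have h1 : ‖D i i * x i‖ = |D i i| * ‖x i‖ := by
    simp [abs_mul]
  rw [h1, mul_pow]
  have : |D i i| ^ 2 ≤ c ^ 2 := by
    have := h i
    nlinarith [abs_nonneg (D i i)]
  nlinarith [sq_nonneg (‖x i‖), sq_nonneg (x i), norm_nonneg (x i)]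

theorem stmt_8
    (d k r : ℕ) (hd : 0 < d) (hr : 0 < r) (hrk : r ≤ k) (hkd : k ≤ d)
    (U : Matrix (Fin d) (Fin r) ℝ) (V : Matrix (Fin d) (Fin (d - r)) ℝ)
    (hU : Uᵀ * U = 1) (hV : Vᵀ * V = 1) (hUV : Uᵀ * V = 0)
    (hUVc : U * Uᵀ + V * Vᵀ = 1)
    (σr σ1 : ℝ) (hσr : 0 < σr)
    (DS : Matrix (Fin r) (Fin r) ℝ) (hDS : DS.IsDiag)
    (hDSlb : ∀ i, σr ≤ DS i i) (hDSub : ∀ i, DS i i ≤ σ1)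
    (DT : Matrix (Fin (d - r)) (Fin (d - r)) ℝ) (hDT : DT.IsDiag)
    (hDTnn : ∀ i, 0 ≤ DT i i)
    (η : ℝ) (hη : η = 1 / (100 * σ1))
    (F : Matrix (Fin d) (Fin k) ℝ)
    (S : Matrix (Fin r) (Fin k) ℝ) (hS : S = Uᵀ * F)
    (T : Matrix (Fin (d - r)) (Fin k) ℝ) (hT : T = Vᵀ * F)
    (MU : Matrix (Fin r) (Fin k) ℝ)
    (hMU : MU = S - η • (S * Sᵀ * S + S * Tᵀ * T - DS * S))
    (MV : Matrix (Fin (d - r)) (Fin k) ℝ)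
    (hMV : MV = T - η • (T * Tᵀ * T + T * Sᵀ * S - DT * T))
    (hinit1 : ‖S * Sᵀ - DS‖ ≤ 0.1 * σr) (hinit2 : ‖T * Tᵀ‖ ≤ 0.1 * σr)
    (hinit3 : ‖S * Tᵀ‖ ≤ 0.1 * σr) (hinitDT : ‖DT‖ ≤ 0.001 * σr) :
    ‖S * MVᵀ‖ ≤ ‖S * Tᵀ‖ := by
  have i0 : Fin r := ⟨0, hr⟩
  have hσ1 : 0 < σ1 := lt_of_lt_of_le hσr ((hDSlb i0).trans (hDSub i0))
  have hηpos : 0 < η := by rw [hη]; positivity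
  have hησ1 : η * σ1 = 1 / 100 := by rw [hη]; field_simp
  have hDTsymm : DTᵀ = DT := hDT.isSymm
  -- key identity
  have key : S * MVᵀ = (1 - η • (S * Sᵀ)) * (S * Tᵀ)
      - η • ((S * Tᵀ) * (T * Tᵀ)) + η • ((S * Tᵀ) * DT) := by
    rw [hMV]
    simp only [transpose_sub, transpose_smul, transpose_add, transpose_mul, hDTsymm,
      Matrix.mul_sub, Matrix.mul_add, Matrix.mul_smul, Matrix.sub_mul, Matrix.smul_mul,
      Matrix.one_mul, Matrix.mul_assoc, transpose_transpose, smul_add, smul_sub]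
    abel
  rw [key]
  set A := S * Tᵀ with hA
  have hAnn : 0 ≤ ‖A‖ := norm_nonneg A
  -- bound on 1 - η • (S*Sᵀ)
  have hBdiag : ‖(1 : Matrix (Fin r) (Fin r) ℝ) - η • DS‖ ≤ 1 - η * σr := by
    apply my_diag_opNorm_le
    · exact Matrix.isDiag_one.sub (hDS.smul η)
    · nlinarith [hDSlb i0, hDSub i0]
    · intro i
      have h1 : ((1 : Matrix (Fin r) (Fin r) ℝ) - η • DS) i i = 1 - η * DS i i := by
        simp [Matrix.sub_apply, Matrix.smul_apply, Matrix.one_apply_eq]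
      rw [h1, abs_le]
      constructor
      · nlinarith [hDSlb i, hDSub i]
      · nlinarith [hDSlb i]
  have hB : ‖(1 : Matrix (Fin r) (Fin r) ℝ) - η • (S * Sᵀ)‖ ≤ 1 - η * σr + η * (0.1 * σr) := by
    have hdecomp : (1 : Matrix (Fin r) (Fin r) ℝ) - η • (S * Sᵀ)
        = ((1 : Matrix (Fin r) (Fin r) ℝ) - η • DS) - η • (S * Sᵀ - DS) := by
      rw [smul_sub]; abel
    rw [hdecomp]
    refine (norm_sub_le _ _).trans ?_
    have : ‖η • (S * Sᵀ - DS)‖ = η * ‖S * Sᵀ - DS‖ := by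
      rw [norm_smul, Real.norm_eq_abs, abs_of_pos hηpos]
    rw [this]
    have := mul_le_mul_of_nonneg_left hinit1 hηpos.le
    linarith
  have hBA : ‖(1 - η • (S * Sᵀ)) * A‖ ≤ (1 - η * σr + η * (0.1 * σr)) * ‖A‖ :=
    (Matrix.l2_opNorm_mul _ _).trans (mul_le_mul_of_nonneg_right hB hAnn)
  have hAT : ‖η • (A * (T * Tᵀ))‖ ≤ η * (‖A‖ * (0.1 * σr)) := by
    rw [norm_smul, Real.norm_eq_abs, abs_of_pos hηpos]
    refine mul_le_mul_of_nonneg_left ?_ hηpos.le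
    exact (Matrix.l2_opNorm_mul _ _).trans (mul_le_mul_of_nonneg_left hinit2 hAnn)
  have hADT : ‖η • (A * DT)‖ ≤ η * (‖A‖ * (0.001 * σr)) := by
    rw [norm_smul, Real.norm_eq_abs, abs_of_pos hηpos]
    refine mul_le_mul_of_nonneg_left ?_ hηpos.le
    exact (Matrix.l2_opNorm_mul _ _).trans (mul_le_mul_of_nonneg_left hinitDT hAnn)
  have htri : ‖(1 - η • (S * Sᵀ)) * A - η • (A * (T * Tᵀ)) + η • (A * DT)‖
      ≤ ‖(1 - η • (S * Sᵀ)) * A‖ + ‖η • (A * (T * Tᵀ))‖ + ‖η • (A * DT)‖ :=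
    (norm_add_le _ _).trans (add_le_add_left (norm_sub_le _ _) _)
  have hprod : 0 ≤ η * σr * ‖A‖ := by positivity
  nlinarith [htri, hBA, hAT, hADT]
end

section
/- Let η ≥ 0, let Δ ∈ ℝ^{d×d} be symmetric, and set F⁺ = F − η(G + ΔF), M_U = Uᵀ(F − ηG), M_V = Vᵀ(F − ηG). Then ‖Uᵀ F⁺ (F⁺)ᵀ U − D_S*‖ ≤ ‖M_U M_Uᵀ − D_S*‖ + η² ‖Δ‖² (‖S Sᵀ‖ + ‖T Tᵀ‖ + 2‖S Tᵀ‖) + 2η ‖M_U Sᵀ − D_S*‖ ‖Δ‖ + 2η ‖M_U Tᵀ‖ ‖Δ‖ + 2η ‖D_S*‖ ‖Δ‖. -/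
open Matrix
open scoped Matrix.Norms.L2Operator

lemma aux_transpose_norm {m n : ℕ} (A : Matrix (Fin m) (Fin n) ℝ) : ‖Aᵀ‖ = ‖A‖ := by
  rw [← Matrix.conjTranspose_eq_transpose_of_trivial, Matrix.l2_opNorm_conjTranspose]

lemma aux_mul_sq {m n : ℕ} (A : Matrix (Fin m) (Fin n) ℝ) : ‖Aᵀ * A‖ = ‖A‖ * ‖A‖ := by
  rw [← Matrix.conjTranspose_eq_transpose_of_trivial, Matrix.l2_opNorm_conjTranspose_mul_self]

lemma aux_orth_norm {m n : ℕ} (A : Matrix (Fin m) (Fin n) ℝ) (h : Aᵀ * A = 1) : ‖A‖ ≤ 1 := by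
  have h1 : ‖A‖ * ‖A‖ = ‖(1 : Matrix (Fin n) (Fin n) ℝ)‖ := by rw [← aux_mul_sq, h]
  have h2 := aux_mul_sq (1 : Matrix (Fin n) (Fin n) ℝ)
  rw [Matrix.transpose_one, one_mul] at h2
  have h0 : (0:ℝ) ≤ ‖A‖ := norm_nonneg _
  have h0' : (0:ℝ) ≤ ‖(1 : Matrix (Fin n) (Fin n) ℝ)‖ := norm_nonneg _
  have hx : ‖(1 : Matrix (Fin n) (Fin n) ℝ)‖ ≤ 1 := by nlinarith
  nlinarith

lemma aux_sandwich {a b c e : ℕ} (P : Matrix (Fin a) (Fin b) ℝ) (Q : Matrix (Fin b) (Fin c) ℝ)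
    (R : Matrix (Fin c) (Fin e) ℝ) (hP : ‖P‖ ≤ 1) (hR : ‖R‖ ≤ 1) : ‖P * (Q * R)‖ ≤ ‖Q‖ := by
  calc ‖P * (Q * R)‖ ≤ ‖P‖ * ‖Q * R‖ := Matrix.l2_opNorm_mul _ _
    _ ≤ 1 * ‖Q * R‖ := by
        exact mul_le_mul_of_nonneg_right hP (norm_nonneg _)
    _ = ‖Q * R‖ := one_mul _
    _ ≤ ‖Q‖ * ‖R‖ := Matrix.l2_opNorm_mul _ _
    _ ≤ ‖Q‖ * 1 := mul_le_mul_of_nonneg_left hR (norm_nonneg _)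
    _ = ‖Q‖ := mul_one _

set_option maxHeartbeats 1000000 in
/-- Deterministic decomposition bound for `‖S⁺ (S⁺)ᵀ - D_S*‖` after one
sample-gradient step `F⁺ = F - η (G + ΔF)`. -/
theorem stmt_11
    (d k r : ℕ) (hd : 0 < d) (hr : 0 < r) (hrk : r ≤ k) (hkd : k ≤ d)
    (U : Matrix (Fin d) (Fin r) ℝ) (V : Matrix (Fin d) (Fin (d - r)) ℝ)
    (hU : Uᵀ * U = 1) (hV : Vᵀ * V = 1) (hUV : Uᵀ * V = 0)
    (hUVc : U * Uᵀ + V * Vᵀ = 1)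
    (DS : Matrix (Fin r) (Fin r) ℝ) (hDS : DS.IsDiag)
    (DT : Matrix (Fin (d - r)) (Fin (d - r)) ℝ) (hDT : DT.IsDiag)
    (X : Matrix (Fin d) (Fin d) ℝ) (hX : X = U * DS * Uᵀ + V * DT * Vᵀ)
    (F : Matrix (Fin d) (Fin k) ℝ)
    (S : Matrix (Fin r) (Fin k) ℝ) (hS : S = Uᵀ * F)
    (T : Matrix (Fin (d - r)) (Fin k) ℝ) (hT : T = Vᵀ * F)
    (G : Matrix (Fin d) (Fin k) ℝ) (hG : G = (F * Fᵀ - X) * F)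
    (η : ℝ) (hη : 0 ≤ η)
    (Δ : Matrix (Fin d) (Fin d) ℝ) (hΔ : Δ.IsSymm)
    (F' : Matrix (Fin d) (Fin k) ℝ) (hF' : F' = F - η • (G + Δ * F))
    (MU : Matrix (Fin r) (Fin k) ℝ) (hMU : MU = Uᵀ * (F - η • G))
    (MV : Matrix (Fin (d - r)) (Fin k) ℝ) (hMV : MV = Vᵀ * (F - η • G)) :
    ‖Uᵀ * F' * F'ᵀ * U - DS‖
      ≤ ‖MU * MUᵀ - DS‖
        + η ^ 2 * ‖Δ‖ ^ 2 * (‖S * Sᵀ‖ + ‖T * Tᵀ‖ + 2 * ‖S * Tᵀ‖)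
        + 2 * η * ‖MU * Sᵀ - DS‖ * ‖Δ‖
        + 2 * η * ‖MU * Tᵀ‖ * ‖Δ‖
        + 2 * η * ‖DS‖ * ‖Δ‖ := by
  have hUn : ‖U‖ ≤ 1 := aux_orth_norm U hU
  have hVn : ‖V‖ ≤ 1 := aux_orth_norm V hV
  have hUtn : ‖Uᵀ‖ ≤ 1 := by rw [aux_transpose_norm]; exact hUn
  have hVtn : ‖Vᵀ‖ ≤ 1 := by rw [aux_transpose_norm]; exact hVn
  set B : Matrix (Fin r) (Fin k) ℝ := Uᵀ * (Δ * F) with hB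
  -- decomposition of F
  have hFdec : F = U * S + V * T := by
    rw [hS, hT, ← Matrix.mul_assoc, ← Matrix.mul_assoc, ← Matrix.add_mul, hUVc, Matrix.one_mul]
  -- key algebraic identity
  have key : Uᵀ * F' * F'ᵀ * U - DS
      = (MU * MUᵀ - DS) + (η^2) • (B * Bᵀ) - η • (MU * Bᵀ) - η • (B * MUᵀ) := by
    rw [hB, hF', hMU]
    simp only [Matrix.transpose_sub, Matrix.transpose_smul, Matrix.transpose_add,
      Matrix.transpose_mul, Matrix.transpose_transpose, Matrix.sub_mul, Matrix.mul_sub,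
      Matrix.add_mul, Matrix.mul_add, smul_sub, smul_add, smul_smul, Matrix.mul_assoc, hΔ.eq,
      Matrix.smul_mul, Matrix.mul_smul]
    module
  -- bound on ‖F * Fᵀ‖
  have hFFeq : F * Fᵀ = U * (S * Sᵀ * Uᵀ) + U * (S * Tᵀ * Vᵀ)
      + V * (T * Sᵀ * Uᵀ) + V * (T * Tᵀ * Vᵀ) := by
    rw [hFdec]
    simp only [Matrix.transpose_add, Matrix.transpose_mul, Matrix.add_mul, Matrix.mul_add,
      Matrix.mul_assoc]
    module
  have hTS : ‖T * Sᵀ‖ = ‖S * Tᵀ‖ := by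
    rw [← aux_transpose_norm (S * Tᵀ)]
    simp [Matrix.transpose_mul]
  have hFFn : ‖F * Fᵀ‖ ≤ ‖S * Sᵀ‖ + ‖T * Tᵀ‖ + 2 * ‖S * Tᵀ‖ := by
    rw [hFFeq]
    have b1 := aux_sandwich U (S * Sᵀ) Uᵀ hUn hUtn
    have b2 := aux_sandwich U (S * Tᵀ) Vᵀ hUn hVtn
    have b3 := aux_sandwich V (T * Sᵀ) Uᵀ hVn hUtn
    have b4 := aux_sandwich V (T * Tᵀ) Vᵀ hVn hVtn
    rw [hTS] at b3
    calc ‖U * (S * Sᵀ * Uᵀ) + U * (S * Tᵀ * Vᵀ) + V * (T * Sᵀ * Uᵀ) + V * (T * Tᵀ * Vᵀ)‖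
        ≤ ‖U * (S * Sᵀ * Uᵀ) + U * (S * Tᵀ * Vᵀ) + V * (T * Sᵀ * Uᵀ)‖ + ‖V * (T * Tᵀ * Vᵀ)‖ :=
          norm_add_le _ _
      _ ≤ ‖U * (S * Sᵀ * Uᵀ) + U * (S * Tᵀ * Vᵀ)‖ + ‖V * (T * Sᵀ * Uᵀ)‖ + ‖V * (T * Tᵀ * Vᵀ)‖ :=
          by gcongr; exact norm_add_le _ _
      _ ≤ ‖U * (S * Sᵀ * Uᵀ)‖ + ‖U * (S * Tᵀ * Vᵀ)‖ + ‖V * (T * Sᵀ * Uᵀ)‖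
            + ‖V * (T * Tᵀ * Vᵀ)‖ := by gcongr; exact norm_add_le _ _
      _ ≤ ‖S * Sᵀ‖ + ‖T * Tᵀ‖ + 2 * ‖S * Tᵀ‖ := by linarith
  -- bound on ‖B‖ and ‖B * Bᵀ‖
  have hBn : ‖B‖ ≤ ‖Δ‖ * ‖F‖ := by
    rw [hB]
    calc ‖Uᵀ * (Δ * F)‖ ≤ ‖Uᵀ‖ * ‖Δ * F‖ := Matrix.l2_opNorm_mul _ _
      _ ≤ 1 * ‖Δ * F‖ := mul_le_mul_of_nonneg_right hUtn (norm_nonneg _)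
      _ = ‖Δ * F‖ := one_mul _
      _ ≤ ‖Δ‖ * ‖F‖ := Matrix.l2_opNorm_mul _ _
  have hFsq : ‖F‖ * ‖F‖ = ‖F * Fᵀ‖ := by
    have := aux_mul_sq Fᵀ
    rw [Matrix.transpose_transpose, aux_transpose_norm] at this
    linarith
  have hBBn : ‖B * Bᵀ‖ ≤ ‖Δ‖^2 * (‖S * Sᵀ‖ + ‖T * Tᵀ‖ + 2 * ‖S * Tᵀ‖) := by
    have h1 : ‖B * Bᵀ‖ ≤ ‖B‖ * ‖Bᵀ‖ := Matrix.l2_opNorm_mul _ _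
    rw [aux_transpose_norm] at h1
    have hΔ0 : (0:ℝ) ≤ ‖Δ‖ := norm_nonneg _
    have hF0 : (0:ℝ) ≤ ‖F‖ := norm_nonneg _
    have hB0 : (0:ℝ) ≤ ‖B‖ := norm_nonneg _
    have h2 : ‖B‖ * ‖B‖ ≤ (‖Δ‖ * ‖F‖) * (‖Δ‖ * ‖F‖) :=
      mul_le_mul hBn hBn hB0 (mul_nonneg hΔ0 hF0)
    have h3 : (‖Δ‖ * ‖F‖) * (‖Δ‖ * ‖F‖) = ‖Δ‖^2 * (‖F‖ * ‖F‖) := by ring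
    rw [hFsq] at h3
    have h4 : ‖Δ‖^2 * ‖F * Fᵀ‖ ≤ ‖Δ‖^2 * (‖S * Sᵀ‖ + ‖T * Tᵀ‖ + 2 * ‖S * Tᵀ‖) :=
      mul_le_mul_of_nonneg_left hFFn (sq_nonneg _)
    linarith
  -- cross term
  have hcross : MU * Bᵀ = (MU * Sᵀ - DS) * (Uᵀ * (Δ * U)) + DS * (Uᵀ * (Δ * U))
      + (MU * Tᵀ) * (Vᵀ * (Δ * U)) := by
    rw [hB, hFdec]
    simp only [Matrix.transpose_add, Matrix.transpose_mul, Matrix.transpose_transpose,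
      Matrix.sub_mul, Matrix.mul_sub, Matrix.add_mul, Matrix.mul_add, Matrix.mul_assoc, hΔ.eq]
    module
  have hUDU : ‖Uᵀ * (Δ * U)‖ ≤ ‖Δ‖ := aux_sandwich Uᵀ Δ U hUtn hUn
  have hVDU : ‖Vᵀ * (Δ * U)‖ ≤ ‖Δ‖ := aux_sandwich Vᵀ Δ U hVtn hUn
  have hMBn : ‖MU * Bᵀ‖ ≤ (‖MU * Sᵀ - DS‖ + ‖DS‖ + ‖MU * Tᵀ‖) * ‖Δ‖ := by
    rw [hcross]
    have c1 : ‖(MU * Sᵀ - DS) * (Uᵀ * (Δ * U))‖ ≤ ‖MU * Sᵀ - DS‖ * ‖Δ‖ :=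
      le_trans (Matrix.l2_opNorm_mul _ _) (mul_le_mul_of_nonneg_left hUDU (norm_nonneg _))
    have c2 : ‖DS * (Uᵀ * (Δ * U))‖ ≤ ‖DS‖ * ‖Δ‖ :=
      le_trans (Matrix.l2_opNorm_mul _ _) (mul_le_mul_of_nonneg_left hUDU (norm_nonneg _))
    have c3 : ‖(MU * Tᵀ) * (Vᵀ * (Δ * U))‖ ≤ ‖MU * Tᵀ‖ * ‖Δ‖ :=
      le_trans (Matrix.l2_opNorm_mul _ _) (mul_le_mul_of_nonneg_left hVDU (norm_nonneg _))
    calc ‖(MU * Sᵀ - DS) * (Uᵀ * (Δ * U)) + DS * (Uᵀ * (Δ * U))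
          + (MU * Tᵀ) * (Vᵀ * (Δ * U))‖
        ≤ ‖(MU * Sᵀ - DS) * (Uᵀ * (Δ * U)) + DS * (Uᵀ * (Δ * U))‖
            + ‖(MU * Tᵀ) * (Vᵀ * (Δ * U))‖ := norm_add_le _ _
      _ ≤ ‖(MU * Sᵀ - DS) * (Uᵀ * (Δ * U))‖ + ‖DS * (Uᵀ * (Δ * U))‖
            + ‖(MU * Tᵀ) * (Vᵀ * (Δ * U))‖ := by gcongr; exact norm_add_le _ _
      _ ≤ (‖MU * Sᵀ - DS‖ + ‖DS‖ + ‖MU * Tᵀ‖) * ‖Δ‖ := by rw [add_mul, add_mul]; linarith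
  have hBMeq : ‖B * MUᵀ‖ = ‖MU * Bᵀ‖ := by
    rw [← aux_transpose_norm (MU * Bᵀ)]
    simp [Matrix.transpose_mul]
  -- combine
  have tri : ‖Uᵀ * F' * F'ᵀ * U - DS‖
      ≤ ‖MU * MUᵀ - DS‖ + η^2 * ‖B * Bᵀ‖ + η * ‖MU * Bᵀ‖ + η * ‖B * MUᵀ‖ := by
    rw [key]
    have t1 : ‖(MU * MUᵀ - DS) + (η^2) • (B * Bᵀ) - η • (MU * Bᵀ) - η • (B * MUᵀ)‖
        ≤ ‖(MU * MUᵀ - DS) + (η^2) • (B * Bᵀ) - η • (MU * Bᵀ)‖ + ‖η • (B * MUᵀ)‖ :=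
      norm_sub_le _ _
    have t2 : ‖(MU * MUᵀ - DS) + (η^2) • (B * Bᵀ) - η • (MU * Bᵀ)‖
        ≤ ‖(MU * MUᵀ - DS) + (η^2) • (B * Bᵀ)‖ + ‖η • (MU * Bᵀ)‖ := norm_sub_le _ _
    have t3 : ‖(MU * MUᵀ - DS) + (η^2) • (B * Bᵀ)‖
        ≤ ‖MU * MUᵀ - DS‖ + ‖(η^2) • (B * Bᵀ)‖ := norm_add_le _ _
    have s1 : ‖(η^2) • (B * Bᵀ)‖ = η^2 * ‖B * Bᵀ‖ := by
      rw [norm_smul, Real.norm_eq_abs, abs_of_nonneg (sq_nonneg η)]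
    have s2 : ‖η • (MU * Bᵀ)‖ = η * ‖MU * Bᵀ‖ := by
      rw [norm_smul, Real.norm_eq_abs, abs_of_nonneg hη]
    have s3 : ‖η • (B * MUᵀ)‖ = η * ‖B * MUᵀ‖ := by
      rw [norm_smul, Real.norm_eq_abs, abs_of_nonneg hη]
    linarith
  have p1 : η^2 * ‖B * Bᵀ‖ ≤ η^2 * (‖Δ‖^2 * (‖S * Sᵀ‖ + ‖T * Tᵀ‖ + 2 * ‖S * Tᵀ‖)) :=
    mul_le_mul_of_nonneg_left hBBn (sq_nonneg η)
  have p2 : η * ‖MU * Bᵀ‖ ≤ η * ((‖MU * Sᵀ - DS‖ + ‖DS‖ + ‖MU * Tᵀ‖) * ‖Δ‖) :=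
    mul_le_mul_of_nonneg_left hMBn hη
  have p3 : η * ‖B * MUᵀ‖ ≤ η * ((‖MU * Sᵀ - DS‖ + ‖DS‖ + ‖MU * Tᵀ‖) * ‖Δ‖) := by
    rw [hBMeq]; exact p2
  nlinarith [tri, p1, p2, p3]
end

section
/- In the one-step sample setting, write ε = √(d log d / n)·σ. If the gradient-noise matrix satisfies ‖Δ‖ ≤ η σ_r D + 4ε, then ‖T⁺ (T⁺)ᵀ‖ ≤ (1 − 0.9 η D)·D + (0.16 ε + 19 D)·η ε. -/
open Matrix
open scoped Matrix.Norms.L2Operator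

set_option maxHeartbeats 2000000


open Matrix
open scoped Matrix.Norms.L2Operator

set_option linter.unusedSectionVars false
set_option linter.unusedVariables false

section Helpers

variable {m n : Type*} [Fintype m] [Fintype n] [DecidableEq m] [DecidableEq n]

lemma myDotSelfNonneg (x : n → ℝ) : 0 ≤ x ⬝ᵥ x :=
  Finset.sum_nonneg fun i _ => mul_self_nonneg _

lemma myDotCS (x y : n → ℝ) : (x ⬝ᵥ y)^2 ≤ (x ⬝ᵥ x) * (y ⬝ᵥ y) := by
  have := Finset.sum_mul_sq_le_sq_mul_sq Finset.univ x y
  simpa [dotProduct, sq] using this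

lemma myDotShift (M : Matrix m n ℝ) (x : m → ℝ) (y : n → ℝ) :
    x ⬝ᵥ (M *ᵥ y) = (Mᵀ *ᵥ x) ⬝ᵥ y := by
  rw [Matrix.mulVec_transpose, ← dotProduct_mulVec]

lemma myEuclidNormSq (x : n → ℝ) :
    ‖((WithLp.equiv 2 (n → ℝ)).symm x)‖^2 = x ⬝ᵥ x := by
  rw [EuclideanSpace.norm_eq]
  rw [Real.sq_sqrt (Finset.sum_nonneg fun i _ => sq_nonneg _)]
  simp [dotProduct, sq]

lemma myMulVecDotLe (A : Matrix m n ℝ) (x : n → ℝ) :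
    (A *ᵥ x) ⬝ᵥ (A *ᵥ x) ≤ ‖A‖^2 * (x ⬝ᵥ x) := by
  have h := Matrix.l2_opNorm_mulVec A ((WithLp.equiv 2 (n → ℝ)).symm x)
  have h0 : (0:ℝ) ≤ ‖A‖ := norm_nonneg _
  have h1 : ‖(EuclideanSpace.equiv m ℝ).symm (A *ᵥ ((WithLp.equiv 2 (n → ℝ)).symm x))‖^2
      ≤ (‖A‖ * ‖((WithLp.equiv 2 (n → ℝ)).symm x)‖)^2 := by
    apply pow_le_pow_left₀ (norm_nonneg _) h
  have h2 : A *ᵥ ((WithLp.equiv 2 (n → ℝ)).symm x) = A *ᵥ x := rfl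
  have h3 : ‖(EuclideanSpace.equiv m ℝ).symm (A *ᵥ x)‖^2 = (A *ᵥ x) ⬝ᵥ (A *ᵥ x) :=
    myEuclidNormSq _
  rw [h2, h3] at h1
  calc (A *ᵥ x) ⬝ᵥ (A *ᵥ x) ≤ (‖A‖ * ‖((WithLp.equiv 2 (n → ℝ)).symm x)‖)^2 := h1
    _ = ‖A‖^2 * (x ⬝ᵥ x) := by rw [mul_pow, myEuclidNormSq]

lemma myOpNormLe (A : Matrix m n ℝ) {β : ℝ} (hβ : 0 ≤ β)
    (h : ∀ x : n → ℝ, (A *ᵥ x) ⬝ᵥ (A *ᵥ x) ≤ β^2 * (x ⬝ᵥ x)) : ‖A‖ ≤ β := by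
  rw [Matrix.l2_opNorm_def]
  apply ContinuousLinearMap.opNorm_le_bound _ hβ
  intro x
  have hx : ((LinearEquiv.trans (Matrix.toEuclideanLin) LinearMap.toContinuousLinearMap) A) x
      = (EuclideanSpace.equiv m ℝ).symm (A *ᵥ (WithLp.equiv 2 (n → ℝ) x)) := rfl
  rw [hx]
  have h1 : ‖(EuclideanSpace.equiv m ℝ).symm (A *ᵥ (WithLp.equiv 2 (n → ℝ) x))‖^2
      = (A *ᵥ (WithLp.equiv 2 (n → ℝ) x)) ⬝ᵥ (A *ᵥ (WithLp.equiv 2 (n → ℝ) x)) :=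
    myEuclidNormSq _
  have h2 := h (WithLp.equiv 2 (n → ℝ) x)
  have h3 : (WithLp.equiv 2 (n → ℝ) x) ⬝ᵥ (WithLp.equiv 2 (n → ℝ) x) = ‖x‖^2 := by
    rw [← myEuclidNormSq]
    congr 1
  nlinarith [norm_nonneg ((EuclideanSpace.equiv m ℝ).symm (A *ᵥ (WithLp.equiv 2 (n → ℝ) x))),
    norm_nonneg x, mul_nonneg hβ (norm_nonneg x)]

end Helpers

section Helpers2

variable {m n : Type*} [Fintype m] [Fintype n] [DecidableEq m] [DecidableEq n]

lemma myQuadLeNorm (A : Matrix n n ℝ) (x : n → ℝ) :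
    x ⬝ᵥ (A *ᵥ x) ≤ ‖A‖ * (x ⬝ᵥ x) := by
  have h1 := myDotCS x (A *ᵥ x)
  have h2 := myMulVecDotLe A x
  have h3 := myDotSelfNonneg x
  have h4 := myDotSelfNonneg (A *ᵥ x)
  have h5 : (0:ℝ) ≤ ‖A‖ := norm_nonneg _
  nlinarith [mul_nonneg h5 h3]

lemma myCSform (A : Matrix n n ℝ) (hsymm : Aᵀ = A)
    (hpos : ∀ z : n → ℝ, 0 ≤ z ⬝ᵥ (A *ᵥ z)) (x y : n → ℝ) :
    (x ⬝ᵥ (A *ᵥ y))^2 ≤ (x ⬝ᵥ (A *ᵥ x)) * (y ⬝ᵥ (A *ᵥ y)) := by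
  have key : ∀ t : ℝ, 0 ≤ (x ⬝ᵥ (A *ᵥ x)) * (t * t) + (2 * (x ⬝ᵥ (A *ᵥ y))) * t
      + (y ⬝ᵥ (A *ᵥ y)) := by
    intro t
    have h := hpos (t • x + y)
    have hxy : y ⬝ᵥ (A *ᵥ x) = x ⬝ᵥ (A *ᵥ y) := by
      rw [myDotShift, hsymm, dotProduct_comm]
    rw [Matrix.mulVec_add, Matrix.mulVec_smul] at h
    simp only [add_dotProduct, smul_dotProduct, dotProduct_add,
      dotProduct_smul, smul_eq_mul] at h
    rw [hxy] at h
    ring_nf at h ⊢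
    linarith
  have hd := discrim_le_zero key
  rw [discrim] at hd
  nlinarith [hd]

lemma myNormLeOfForm (A : Matrix n n ℝ) (hsymm : Aᵀ = A)
    (hpos : ∀ z : n → ℝ, 0 ≤ z ⬝ᵥ (A *ᵥ z)) {β : ℝ} (hβ : 0 ≤ β)
    (h : ∀ x : n → ℝ, x ⬝ᵥ (A *ᵥ x) ≤ β * (x ⬝ᵥ x)) : ‖A‖ ≤ β := by
  apply myOpNormLe A hβ
  intro x
  set y := A *ᵥ x with hy
  have h1 : x ⬝ᵥ (A *ᵥ y) = y ⬝ᵥ y := by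
    rw [myDotShift, hsymm]
  have h2 := myCSform A hsymm hpos x y
  rw [h1] at h2
  have h3 := h x
  have h4 := h y
  have h5 := myDotSelfNonneg x
  have h6 := myDotSelfNonneg y
  have h7 := hpos x
  rcases eq_or_lt_of_le h6 with he | hlt
  · nlinarith [he]
  · -- (y⬝y)^2 ≤ (x⬝Ax)(y⬝Ay) ≤ β(x⬝x) β(y⬝y)
    have : (y ⬝ᵥ y)^2 ≤ β * (x ⬝ᵥ x) * (β * (y ⬝ᵥ y)) := by
      nlinarith [hpos y, mul_nonneg hβ h5]
    nlinarith [this]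

lemma myNormTranspose (A : Matrix m n ℝ) : ‖Aᵀ‖ = ‖A‖ := by
  have : Aᴴ = Aᵀ := by
    ext i j
    simp [Matrix.conjTranspose_apply]
  rw [← this, Matrix.l2_opNorm_conjTranspose]

lemma myNormMulSelf (A : Matrix m n ℝ) : ‖A * Aᵀ‖ = ‖A‖^2 := by
  have h := Matrix.l2_opNorm_conjTranspose_mul_self (Aᵀ)
  have h2 : (Aᵀ)ᴴ = A := by
    ext i j
    simp [Matrix.conjTranspose_apply]
  rw [h2] at h
  rw [h, myNormTranspose, sq]

lemma myNormOneLe : ‖(1 : Matrix n n ℝ)‖ ≤ 1 := by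
  apply myNormLeOfForm
  · exact Matrix.transpose_one
  · intro z; rw [Matrix.one_mulVec]; exact myDotSelfNonneg z
  · norm_num
  · intro x; rw [Matrix.one_mulVec, one_mul]

lemma mySemiUnitary {U : Matrix m n ℝ} (h : Uᵀ * U = 1) : ‖U‖ ≤ 1 := by
  have h1 : ‖U‖^2 = ‖Uᵀ * U‖ := by
    have := myNormMulSelf (Uᵀ)
    rw [Matrix.transpose_transpose, myNormTranspose] at this
    rw [this]
  have h2 : ‖Uᵀ * U‖ ≤ 1 := by rw [h]; exact myNormOneLe
  nlinarith [norm_nonneg U]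

end Helpers2

lemma myScalarFinal (a e g : ℝ) (ha0 : 0 ≤ a) (ha : a ≤ 0.001) (he0 : 0 ≤ e)
    (he : e ≤ 0.000015) (hg0 : 0 ≤ g) (hg : g ≤ a/100 + 4*e) :
    2*a*e + 4*a*g + a*e^2 + 4*a*e*g + (1/100 + 2*a)*g^2 ≤ a^2 + 0.16*e^2 + 19*a*e := by
  have hb0 : 0 ≤ a/100 + 4*e := by linarith
  have h1 : 4*a*g ≤ 4*a*(a/100+4*e) := by nlinarith
  have h2 : 4*a*e*g ≤ 4*a*e*(a/100+4*e) := by nlinarith [mul_nonneg ha0 he0]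
  have hgsq : g^2 ≤ (a/100+4*e)^2 := by nlinarith
  have h3 : (1/100 + 2*a)*g^2 ≤ (1/100 + 2*a)*(a/100+4*e)^2 := by nlinarith
  nlinarith [mul_nonneg (sub_nonneg.2 ha) (mul_nonneg ha0 ha0),
    mul_nonneg (sub_nonneg.2 he) (mul_nonneg ha0 he0),
    mul_nonneg (sub_nonneg.2 ha) (mul_nonneg ha0 he0),
    mul_nonneg ha0 (mul_nonneg he0 he0), mul_nonneg ha0 he0]

-- pointwise contraction scalar lemma
lemma myContraction (η D m s z : ℝ) (hη : 0 < η) (hD0 : 0 ≤ D) (hηD : η*D ≤ 0.001)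
    (hm0 : 0 ≤ m) (hms : m ≤ D*s) (hs0 : 0 ≤ s) (hz0 : 0 ≤ z) (hcs : m^2 ≤ s*z) :
    m - 1.9*η*z ≤ (D - 1.9*η*D^2)*s := by
  rcases eq_or_lt_of_le hs0 with hs | hs
  · have : m = 0 := by nlinarith
    nlinarith
  · have hfac : 0 ≤ s - 1.9*η*(D*s+m) := by nlinarith
    have hprod : 0 ≤ (D*s - m) * (s - 1.9*η*(D*s+m)) := by
      apply mul_nonneg (by linarith) hfac
    -- s*(m - 1.9ηz) ≤ m*s - 1.9η m² ≤ (D-1.9ηD²)s²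
    have h1 : m*s - 1.9*η*m^2 ≤ (D - 1.9*η*D^2)*s^2 := by nlinarith
    have h2 : s*(m - 1.9*η*z) ≤ m*s - 1.9*η*m^2 := by nlinarith
    have h3 : s*(m - 1.9*η*z) ≤ (D - 1.9*η*D^2)*(s*s) := by nlinarith
    exact le_of_mul_le_mul_left (by nlinarith) hs

lemma myEpsSmall (d k n : ℕ) (σ σr κ : ℝ) (hd : 2 ≤ d) (hk : 1 ≤ k) (hn : 0 < n)
    (hσ : 0 ≤ σ) (hσr : 0 < σr) (hκ1 : 1 ≤ κ)
    (hnbig : (10 : ℝ) ^ 6 * k * κ ^ 2 * d * (Real.log d) ^ 3 * max 1 (σ ^ 2 / σr ^ 2) ≤ n) :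
    Real.sqrt (d * Real.log d / n) * σ ≤ 0.0015 * σr := by
  set M : ℝ := max 1 (σ ^ 2 / σr ^ 2) with hM
  have hd2 : (2:ℝ) ≤ (d:ℝ) := by exact_mod_cast hd
  have hk1 : (1:ℝ) ≤ (k:ℝ) := by exact_mod_cast hk
  have hnn : (0:ℝ) < (n:ℝ) := by exact_mod_cast hn
  have hlog2 : (0.6931:ℝ) ≤ Real.log 2 := by
    have := Real.log_two_gt_d9
    linarith
  have hlogd : (0.6931:ℝ) ≤ Real.log d := by
    have h2 : Real.log 2 ≤ Real.log d := Real.log_le_log (by norm_num) hd2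
    linarith
  have hlogpos : (0:ℝ) < Real.log d := by linarith
  have hM1 : (1:ℝ) ≤ M := le_max_left _ _
  have hMσ : σ^2 ≤ M * σr^2 := by
    have h := le_max_right 1 (σ^2/σr^2)
    rw [← hM] at h
    have hσr2 : (0:ℝ) < σr^2 := by positivity
    calc σ^2 = σ^2/σr^2 * σr^2 := by field_simp
      _ ≤ M * σr^2 := by apply mul_le_mul_of_nonneg_right h (le_of_lt hσr2)
  have h48 : (0.48:ℝ) ≤ (Real.log d)^2 := by nlinarith
  have hkk : (1:ℝ) ≤ (k:ℝ)*κ^2 := by nlinarith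
  have hA : (1:ℝ) ≤ 2.25*((k:ℝ)*κ^2*(Real.log d)^2) := by nlinarith
  -- main bound on ε²
  have hε2 : (Real.sqrt (d * Real.log d / n) * σ)^2 = (d*Real.log d/n)*σ^2 := by
    rw [mul_pow, Real.sq_sqrt (by positivity)]
  have hchain : (d:ℝ)*Real.log d*σ^2 ≤ 0.00000225*σr^2*(n:ℝ) := by
    have hs1 : (d:ℝ)*Real.log d*σ^2 ≤ (d:ℝ)*Real.log d*(M*σr^2) := by
      apply mul_le_mul_of_nonneg_left hMσ (by positivity)
    have hs2 : 0.00000225*σr^2*((10:ℝ)^6*k*κ^2*d*(Real.log d)^3*M) ≤ 0.00000225*σr^2*(n:ℝ) := by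
      apply mul_le_mul_of_nonneg_left hnbig (by positivity)
    have hs3 : (d:ℝ)*Real.log d*(M*σr^2) ≤ 0.00000225*σr^2*((10:ℝ)^6*k*κ^2*d*(Real.log d)^3*M) := by
      have hz : (0:ℝ) ≤ (d:ℝ)*Real.log d*(M*σr^2) := by positivity
      have : 0.00000225*σr^2*((10:ℝ)^6*k*κ^2*d*(Real.log d)^3*M)
          = ((d:ℝ)*Real.log d*(M*σr^2)) * (2.25*((k:ℝ)*κ^2*(Real.log d)^2)) := by ring
      rw [this]
      nlinarith [hz, hA]
    linarith
  have hεb : (Real.sqrt (d * Real.log d / n) * σ)^2 ≤ (0.0015*σr)^2 := by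
    rw [hε2]
    rw [div_mul_eq_mul_div, div_le_iff₀ hnn]
    calc (d:ℝ)*Real.log d*σ^2 ≤ 0.00000225*σr^2*(n:ℝ) := hchain
      _ = (0.0015*σr)^2 * n := by ring
  have hε0 : 0 ≤ Real.sqrt (d * Real.log d / n) * σ := by positivity
  nlinarith [hεb, hε0, mul_pos (by norm_num : (0:ℝ) < 0.0015) hσr]



section Helpers3

variable {p q : Type*} [Fintype p] [Fintype q] [DecidableEq p] [DecidableEq q]

lemma myWvec (η : ℝ) (F : Matrix p q ℝ) (z : q → ℝ) :
    ((1 : Matrix q q ℝ) - η • (Fᵀ * F)) *ᵥ z = z - η • (Fᵀ *ᵥ (F *ᵥ z)) := by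
  rw [Matrix.sub_mulVec, Matrix.one_mulVec, Matrix.smul_mulVec, Matrix.mulVec_mulVec]

lemma myWform (η : ℝ) (F : Matrix p q ℝ) (z : q → ℝ) :
    z ⬝ᵥ (((1 : Matrix q q ℝ) - η • (Fᵀ * F)) *ᵥ z)
      = z ⬝ᵥ z - η * ((F *ᵥ z) ⬝ᵥ (F *ᵥ z)) := by
  rw [myWvec, dotProduct_sub, dotProduct_smul]
  have : z ⬝ᵥ (Fᵀ *ᵥ (F *ᵥ z)) = (F *ᵥ z) ⬝ᵥ (F *ᵥ z) := by
    rw [myDotShift, Matrix.transpose_transpose]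
  rw [this, smul_eq_mul]

lemma myWnorm (η : ℝ) (hη : 0 ≤ η) (F : Matrix p q ℝ) (hc : η * ‖F‖^2 ≤ 1) :
    ‖(1 : Matrix q q ℝ) - η • (Fᵀ * F)‖ ≤ 1 := by
  apply myNormLeOfForm
  · simp [Matrix.transpose_sub, Matrix.transpose_smul, Matrix.transpose_one,
      Matrix.transpose_mul, Matrix.transpose_transpose]
  · intro z
    rw [myWform]
    have h1 := myMulVecDotLe F z
    have h2 := myDotSelfNonneg z
    have h3 := myDotSelfNonneg (F *ᵥ z)
    nlinarith [mul_le_mul_of_nonneg_left h1 hη, sq_nonneg ‖F‖]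
  · norm_num
  · intro x
    rw [myWform]
    have h3 := myDotSelfNonneg (F *ᵥ x)
    nlinarith [mul_nonneg hη h3]

lemma myDiagNorm (Dg : Matrix p p ℝ) (hdiag : Dg.IsDiag) (β : ℝ) (hβ0 : 0 ≤ β)
    (hlb : ∀ i, 0 ≤ Dg i i) (hub : ∀ i, Dg i i ≤ β) : ‖Dg‖ ≤ β := by
  have hmv : ∀ (x : p → ℝ) (i : p), (Dg *ᵥ x) i = Dg i i * x i := by
    intro x i
    simp only [Matrix.mulVec, dotProduct]
    rw [Finset.sum_eq_single i]
    · intro b _ hb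
      rw [hdiag (Ne.symm hb), zero_mul]
    · intro h
      exact absurd (Finset.mem_univ i) h
  have hform : ∀ x : p → ℝ, x ⬝ᵥ (Dg *ᵥ x) = ∑ i, Dg i i * (x i * x i) := by
    intro x
    simp only [dotProduct, hmv]
    apply Finset.sum_congr rfl
    intro i _
    ring
  apply myNormLeOfForm _ hdiag.isSymm
  · intro z
    rw [hform]
    exact Finset.sum_nonneg fun i _ => mul_nonneg (hlb i) (mul_self_nonneg _)
  · exact hβ0
  · intro x
    rw [hform]
    have : β * (x ⬝ᵥ x) = ∑ i, β * (x i * x i) := by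
      rw [dotProduct, Finset.mul_sum]
    rw [this]
    exact Finset.sum_le_sum fun i _ =>
      mul_le_mul_of_nonneg_right (hub i) (mul_self_nonneg _)

lemma mySmulNorm (c : ℝ) (hc : 0 ≤ c) (M : Matrix p q ℝ) : ‖c • M‖ = c * ‖M‖ := by
  rw [norm_smul, Real.norm_eq_abs, abs_of_nonneg hc]

lemma myMulNormLe {s : Type*} [Fintype s] [DecidableEq s]
    (M : Matrix p q ℝ) (N : Matrix q s ℝ) {a b : ℝ} (ha : 0 ≤ a)
    (hM : ‖M‖ ≤ a) (hN : ‖N‖ ≤ b) : ‖M * N‖ ≤ a * b :=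
  le_trans (Matrix.l2_opNorm_mul M N) (mul_le_mul hM hN (norm_nonneg N) ha)

end Helpers3

theorem stmt_14
    (d k r : ℕ) (hd : 2 ≤ d) (hr : 0 < r) (hrk : r ≤ k) (hkd : k ≤ d)
    (U : Matrix (Fin d) (Fin r) ℝ) (V : Matrix (Fin d) (Fin (d - r)) ℝ)
    (hU : Uᵀ * U = 1) (hV : Vᵀ * V = 1) (hUV : Uᵀ * V = 0)
    (hUVc : U * Uᵀ + V * Vᵀ = 1)
    (σr σ1 : ℝ) (hσr : 0 < σr)
    (DS : Matrix (Fin r) (Fin r) ℝ) (hDS : DS.IsDiag)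
    (hDSlb : ∀ i, σr ≤ DS i i) (hDSub : ∀ i, DS i i ≤ σ1)
    (DT : Matrix (Fin (d - r)) (Fin (d - r)) ℝ) (hDT : DT.IsDiag)
    (hDTnn : ∀ i, 0 ≤ DT i i)
    (κ : ℝ) (hκ : κ = σ1 / σr)
    (η : ℝ) (hη : η = 1 / (100 * σ1))
    (X : Matrix (Fin d) (Fin d) ℝ) (hX : X = U * DS * Uᵀ + V * DT * Vᵀ)
    (F : Matrix (Fin d) (Fin k) ℝ)
    (S : Matrix (Fin r) (Fin k) ℝ) (hS : S = Uᵀ * F)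
    (T : Matrix (Fin (d - r)) (Fin k) ℝ) (hT : T = Vᵀ * F)
    (G : Matrix (Fin d) (Fin k) ℝ) (hG : G = (F * Fᵀ - X) * F)
    (σ : ℝ) (hσ : 0 ≤ σ)
    (n : ℕ) (hn : 0 < n)
    (hnbig : (10 : ℝ) ^ 6 * k * κ ^ 2 * d * (Real.log d) ^ 3 * max 1 (σ ^ 2 / σr ^ 2) ≤ n)
    (Δ : Matrix (Fin d) (Fin d) ℝ) (hΔsymm : Δ.IsSymm)
    (Fp : Matrix (Fin d) (Fin k) ℝ) (hFp : Fp = F - η • (G + Δ * F))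
    (Sp : Matrix (Fin r) (Fin k) ℝ) (hSp : Sp = Uᵀ * Fp)
    (Tp : Matrix (Fin (d - r)) (Fin k) ℝ) (hTp : Tp = Vᵀ * Fp)
    (D : ℝ) (hD : D = max (max ‖S * Sᵀ - DS‖ ‖T * Tᵀ‖) ‖S * Tᵀ‖)
    (hDTsmall : ‖DT‖ ≤ Real.sqrt (d * Real.log d / n) * σ)
    (hinit : D ≤ 0.1 * σr)
    (ε : ℝ) (hε : ε = Real.sqrt (d * Real.log d / n) * σ)
    (hΔ : ‖Δ‖ ≤ η * σr * D + 4 * ε) :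
    ‖Tp * Tpᵀ‖ ≤ (1 - 0.9 * η * D) * D + (0.16 * ε + 19 * D) * η * ε := by
  -- ==== basic scalar facts ====
  have hσ1 : σr ≤ σ1 := le_trans (hDSlb ⟨0, hr⟩) (hDSub ⟨0, hr⟩)
  have hσ1pos : (0:ℝ) < σ1 := lt_of_lt_of_le hσr hσ1
  have hηpos : (0:ℝ) < η := by rw [hη]; positivity
  have hησ1 : η * σ1 = 1/100 := by rw [hη]; field_simp
  have hD0 : (0:ℝ) ≤ D := by
    rw [hD]; exact le_trans (norm_nonneg (T*Tᵀ)) (le_trans (le_max_right _ _) (le_max_left _ _))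
  have htD : ‖T * Tᵀ‖ ≤ D := by rw [hD]; exact le_trans (le_max_right _ _) (le_max_left _ _)
  have hSTD : ‖S * Tᵀ‖ ≤ D := by rw [hD]; exact le_max_right _ _
  have hSSD : ‖S * Sᵀ - DS‖ ≤ D := by rw [hD]; exact le_trans (le_max_left _ _) (le_max_left _ _)
  have hε0 : (0:ℝ) ≤ ε := by rw [hε]; positivity
  have hκ1 : (1:ℝ) ≤ κ := by rw [hκ, le_div_iff₀ hσr]; linarith only [hσ1]
  have hk1 : 1 ≤ k := le_trans hr hrk
  have hεsmall : ε ≤ 0.0015 * σr := by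
    rw [hε]; exact myEpsSmall d k n σ σr κ hd hk1 hn hσ hσr hκ1 hnbig
  have hDTε : ‖DT‖ ≤ ε := by rw [hε]; exact hDTsmall
  have hησr : η * σr ≤ 1/100 := by nlinarith only [hσ1, hηpos, hησ1]
  have hηD : η * D ≤ 0.001 := by nlinarith only [hinit, hηpos, hησr, hD0]
  have hηε : η * ε ≤ 0.000015 := by nlinarith only [hεsmall, hηpos, hησr, hε0]
  have hδ0 : (0:ℝ) ≤ ‖Δ‖ := norm_nonneg _
  -- ==== semi-orthogonality ====
  have hVU : Vᵀ * U = 0 := by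
    have h := congrArg Matrix.transpose hUV
    rw [Matrix.transpose_mul, Matrix.transpose_transpose, Matrix.transpose_zero] at h
    exact h
  have hUn : ‖U‖ ≤ 1 := mySemiUnitary hU
  have hVn : ‖V‖ ≤ 1 := mySemiUnitary hV
  have hUtn : ‖Uᵀ‖ ≤ 1 := by rw [myNormTranspose]; exact hUn
  have hVtn : ‖Vᵀ‖ ≤ 1 := by rw [myNormTranspose]; exact hVn
  -- ==== matrix decomposition ====
  have hF : F = U * S + V * T := by
    rw [hS, hT, ← Matrix.mul_assoc, ← Matrix.mul_assoc, ← Matrix.add_mul, hUVc, Matrix.one_mul]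
  have hFtF : Fᵀ * F = Sᵀ * S + Tᵀ * T := by
    have hSt : Sᵀ = Fᵀ * U := by rw [hS, Matrix.transpose_mul, Matrix.transpose_transpose]
    have hTt : Tᵀ = Fᵀ * V := by rw [hT, Matrix.transpose_mul, Matrix.transpose_transpose]
    calc Fᵀ * F = Fᵀ * (1 : Matrix (Fin d) (Fin d) ℝ) * F := by rw [Matrix.mul_one]
      _ = Fᵀ * (U * Uᵀ + V * Vᵀ) * F := by rw [hUVc]
      _ = Sᵀ * S + Tᵀ * T := by
          rw [hSt, hTt, hS, hT]
          simp only [Matrix.mul_add, Matrix.add_mul, Matrix.mul_assoc]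
  -- ==== key norm facts ====
  have hFn2 : ‖F * Fᵀ‖ = ‖F‖^2 := myNormMulSelf F
  have hFtFn : ‖Fᵀ * F‖ = ‖F‖^2 := by
    have := myNormMulSelf (Fᵀ)
    rw [Matrix.transpose_transpose, myNormTranspose] at this
    exact this
  have hSn2 : ‖S * Sᵀ‖ = ‖S‖^2 := myNormMulSelf S
  have hTn2 : ‖T * Tᵀ‖ = ‖T‖^2 := myNormMulSelf T
  have hDSn : ‖DS‖ ≤ σ1 := by
    apply myDiagNorm DS hDS σ1 (le_of_lt hσ1pos)
    · intro i; exact le_trans (le_of_lt hσr) (hDSlb i)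
    · exact hDSub
  have hSSn : ‖S * Sᵀ‖ ≤ D + σ1 := by
    calc ‖S * Sᵀ‖ = ‖(S * Sᵀ - DS) + DS‖ := by rw [sub_add_cancel]
      _ ≤ ‖S * Sᵀ - DS‖ + ‖DS‖ := norm_add_le _ _
      _ ≤ D + σ1 := add_le_add hSSD hDSn
  have hc : ‖F * Fᵀ‖ ≤ σ1 + 2*D := by
    have h1 : ‖Fᵀ * F‖ ≤ ‖Sᵀ * S‖ + ‖Tᵀ * T‖ := by
      rw [hFtF]; exact norm_add_le _ _
    have h2 : ‖Sᵀ * S‖ = ‖S‖^2 := by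
      have := myNormMulSelf (Sᵀ)
      rw [Matrix.transpose_transpose, myNormTranspose] at this
      exact this
    have h3 : ‖Tᵀ * T‖ = ‖T‖^2 := by
      have := myNormMulSelf (Tᵀ)
      rw [Matrix.transpose_transpose, myNormTranspose] at this
      exact this
    rw [hFn2, ← hFtFn]
    rw [h2, h3] at h1
    rw [← hSn2, ← hTn2] at h1
    linarith only [h1, hSSn, htD]
  have hc0 : (0:ℝ) ≤ ‖F * Fᵀ‖ := norm_nonneg _
  have hηc : η * ‖F * Fᵀ‖ ≤ 0.1 := by nlinarith only [hc, hησ1, hηD, hηpos, hc0, hD0]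
  have hηF2 : η * ‖F‖^2 ≤ 1 := by rw [← hFn2]; linarith only [hηc]
  have hηFt2 : η * ‖Fᵀ‖^2 ≤ 1 := by rw [myNormTranspose]; exact hηF2
  -- TFᵀ bound
  have hTSn : ‖T * Sᵀ‖ ≤ D := by
    have : T * Sᵀ = (S * Tᵀ)ᵀ := by
      rw [Matrix.transpose_mul, Matrix.transpose_transpose]
    rw [this, myNormTranspose]
    exact hSTD
  have hTFt : ‖T * Fᵀ‖ ≤ 2*D := by
    have hid : T * Fᵀ = (T * Sᵀ) * Uᵀ + (T * Tᵀ) * Vᵀ := by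
      rw [hF, Matrix.transpose_add, Matrix.transpose_mul, Matrix.transpose_mul,
        Matrix.mul_add, ← Matrix.mul_assoc, ← Matrix.mul_assoc]
    rw [hid]
    calc ‖(T * Sᵀ) * Uᵀ + (T * Tᵀ) * Vᵀ‖ ≤ ‖(T * Sᵀ) * Uᵀ‖ + ‖(T * Tᵀ) * Vᵀ‖ := norm_add_le _ _
      _ ≤ ‖T * Sᵀ‖ * ‖Uᵀ‖ + ‖T * Tᵀ‖ * ‖Vᵀ‖ :=
          add_le_add (Matrix.l2_opNorm_mul _ _) (Matrix.l2_opNorm_mul _ _)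
      _ ≤ D * 1 + D * 1 := by
          apply add_le_add
          · exact mul_le_mul hTSn hUtn (norm_nonneg _) hD0
          · exact mul_le_mul htD hVtn (norm_nonneg _) hD0
      _ = 2*D := by ring
  -- ==== decomposition of Tp ====
  set W : Matrix (Fin k) (Fin k) ℝ := (1 : Matrix (Fin k) (Fin k) ℝ) - η • (Fᵀ * F) with hWdef
  set W' : Matrix (Fin d) (Fin d) ℝ := (1 : Matrix (Fin d) (Fin d) ℝ) - η • (F * Fᵀ) with hW'def
  have hW1 : ‖W‖ ≤ 1 := myWnorm η (le_of_lt hηpos) F hηF2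
  have hW'1 : ‖W'‖ ≤ 1 := by
    have h := myWnorm η (le_of_lt hηpos) (Fᵀ) hηFt2
    rw [Matrix.transpose_transpose] at h
    exact h
  set A : Matrix (Fin (d-r)) (Fin k) ℝ := T * W with hAdef
  set B : Matrix (Fin (d-r)) (Fin k) ℝ := η • (DT * T) with hBdef
  set C : Matrix (Fin (d-r)) (Fin k) ℝ := η • (Vᵀ * Δ * F) with hCdef
  have hVX : Vᵀ * X = DT * Vᵀ := by
    rw [hX]
    simp only [Matrix.mul_add, ← Matrix.mul_assoc]
    rw [hVU, hV]
    simp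
  have hVG : Vᵀ * G = T * Fᵀ * F - DT * T := by
    rw [hG]
    have h1 : Vᵀ * ((F * Fᵀ - X) * F) = (Vᵀ * (F * Fᵀ) - Vᵀ * X) * F := by
      rw [← Matrix.mul_assoc, Matrix.mul_sub]
    rw [h1, hVX, Matrix.sub_mul]
    congr 1
    · rw [← Matrix.mul_assoc, ← hT]
    · rw [Matrix.mul_assoc, ← hT]
  have hTpABC : Tp = A + B - C := by
    rw [hTp, hFp, Matrix.mul_sub, Matrix.mul_smul, Matrix.mul_add, hVG, ← hT, ← Matrix.mul_assoc]
    rw [hAdef, hBdef, hCdef, hWdef]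
    rw [Matrix.mul_sub, Matrix.mul_one, Matrix.mul_smul]
    rw [smul_add, smul_sub]
    rw [← Matrix.mul_assoc]
    abel
  have hexp : Tp * Tpᵀ = A*Aᵀ + A*Bᵀ + B*Aᵀ + B*Bᵀ - A*Cᵀ - C*Aᵀ - B*Cᵀ - C*Bᵀ + C*Cᵀ := by
    rw [hTpABC]
    simp only [Matrix.transpose_add, Matrix.transpose_sub, Matrix.mul_add, Matrix.mul_sub,
      Matrix.add_mul, Matrix.sub_mul]
    abel
  -- ==== norm bounds on the nine pieces ====
  have hη0 : (0:ℝ) ≤ η := le_of_lt hηpos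
  have hη2 : (0:ℝ) ≤ η*η := mul_nonneg hη0 hη0
  have hTW : ‖T * W‖ ≤ ‖T‖ := by
    have := myMulNormLe T W (norm_nonneg T) (le_refl _) hW1
    simpa using this
  have hBt : Bᵀ = η • (Tᵀ * DT) := by
    rw [hBdef, Matrix.transpose_smul, Matrix.transpose_mul, hDT.isSymm.eq]
  have hCt : Cᵀ = η • (Fᵀ * (Δ * V)) := by
    rw [hCdef, Matrix.transpose_smul, Matrix.transpose_mul, Matrix.transpose_mul,
      Matrix.transpose_transpose, hΔsymm.eq]
  have hTn0 : (0:ℝ) ≤ ‖T‖ := norm_nonneg T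
  have hT2D : ‖T‖ * ‖T‖ ≤ D := by rw [← sq, ← hTn2]; exact htD
  -- AB
  have hAB : ‖A * Bᵀ‖ ≤ η * (D * ε) := by
    have hid : A * Bᵀ = η • ((T * W) * (Tᵀ * DT)) := by
      rw [hAdef, hBt, Matrix.mul_smul]
    rw [hid, mySmulNorm η hη0]
    apply mul_le_mul_of_nonneg_left _ hη0
    have h2 : ‖Tᵀ * DT‖ ≤ ‖T‖ * ε := by
      apply myMulNormLe _ _ hTn0 _ hDTε
      rw [myNormTranspose]
    calc ‖(T * W) * (Tᵀ * DT)‖ ≤ ‖T‖ * (‖T‖ * ε) := myMulNormLe _ _ hTn0 hTW h2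
      _ = (‖T‖ * ‖T‖) * ε := by ring
      _ ≤ D * ε := mul_le_mul_of_nonneg_right hT2D hε0
  have hBA : ‖B * Aᵀ‖ ≤ η * (D * ε) := by
    have htr : (A * Bᵀ)ᵀ = B * Aᵀ := by
      conv_lhs => rw [Matrix.transpose_mul, Matrix.transpose_transpose]
    rw [← htr, myNormTranspose]
    exact hAB
  -- AC
  have hkeyassoc : T * W * Fᵀ = T * Fᵀ * W' := by
    have hmid : T * (Fᵀ * F) * Fᵀ = T * Fᵀ * (F * Fᵀ) := by simp only [Matrix.mul_assoc]
    calc T * W * Fᵀ = T * Fᵀ - η • (T * (Fᵀ * F) * Fᵀ) := by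
          rw [hWdef, Matrix.mul_sub, Matrix.mul_one, Matrix.mul_smul, Matrix.sub_mul,
            Matrix.smul_mul]
      _ = T * Fᵀ - η • (T * Fᵀ * (F * Fᵀ)) := by rw [hmid]
      _ = T * Fᵀ * W' := by rw [hW'def, Matrix.mul_sub, Matrix.mul_one, Matrix.mul_smul]
  have hTFW' : ‖T * Fᵀ * W'‖ ≤ 2*D := by
    have := myMulNormLe (T * Fᵀ) W' (by linarith only [hD0]) hTFt hW'1
    simpa using this
  have hΔV : ‖Δ * V‖ ≤ ‖Δ‖ := by
    have := myMulNormLe Δ V hδ0 (le_refl _) hVn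
    simpa using this
  have hAC : ‖A * Cᵀ‖ ≤ η * (2*D*‖Δ‖) := by
    have hid : A * Cᵀ = η • ((T * Fᵀ * W') * (Δ * V)) := by
      rw [hAdef, hCt, Matrix.mul_smul, ← hkeyassoc]
      congr 1
      simp only [Matrix.mul_assoc]
    rw [hid, mySmulNorm η hη0]
    apply mul_le_mul_of_nonneg_left _ hη0
    calc ‖(T * Fᵀ * W') * (Δ * V)‖ ≤ (2*D) * ‖Δ‖ :=
          myMulNormLe _ _ (by linarith only [hD0]) hTFW' hΔV
      _ = 2*D*‖Δ‖ := by ring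
  have hCA : ‖C * Aᵀ‖ ≤ η * (2*D*‖Δ‖) := by
    have htr : (A * Cᵀ)ᵀ = C * Aᵀ := by
      conv_lhs => rw [Matrix.transpose_mul, Matrix.transpose_transpose]
    rw [← htr, myNormTranspose]
    exact hAC
  -- BB
  have hDTTTt : ‖DT * (T * Tᵀ)‖ ≤ ε * D := myMulNormLe _ _ hε0 hDTε htD
  have hBB : ‖B * Bᵀ‖ ≤ η^2 * (ε * D * ε) := by
    have hid : B * Bᵀ = (η*η) • ((DT * (T * Tᵀ)) * DT) := by
      rw [hBdef, hBt, Matrix.smul_mul, Matrix.mul_smul, smul_smul]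
      congr 1
      simp only [Matrix.mul_assoc]
    rw [hid, mySmulNorm (η*η) hη2, sq]
    apply mul_le_mul_of_nonneg_left _ hη2
    have := myMulNormLe (DT * (T * Tᵀ)) DT (mul_nonneg hε0 hD0) hDTTTt hDTε
    linarith only [this]
  -- BC
  have hTFΔV : ‖(T * Fᵀ) * (Δ * V)‖ ≤ 2*D*‖Δ‖ := by
    have := myMulNormLe (T * Fᵀ) (Δ * V) (by linarith only [hD0]) hTFt hΔV
    linarith only [this]
  have hBC : ‖B * Cᵀ‖ ≤ η^2 * (ε * (2*D*‖Δ‖)) := by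
    have hid : B * Cᵀ = (η*η) • (DT * ((T * Fᵀ) * (Δ * V))) := by
      rw [hBdef, hCt, Matrix.smul_mul, Matrix.mul_smul, smul_smul]
      congr 1
      simp only [Matrix.mul_assoc]
    rw [hid, mySmulNorm (η*η) hη2, sq]
    apply mul_le_mul_of_nonneg_left _ hη2
    exact myMulNormLe DT _ hε0 hDTε hTFΔV
  have hCB : ‖C * Bᵀ‖ ≤ η^2 * (ε * (2*D*‖Δ‖)) := by
    have htr : (B * Cᵀ)ᵀ = C * Bᵀ := by
      conv_lhs => rw [Matrix.transpose_mul, Matrix.transpose_transpose]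
    rw [← htr, myNormTranspose]
    exact hBC
  -- CC
  have hVtΔ : ‖Vᵀ * Δ‖ ≤ ‖Δ‖ := by
    have := myMulNormLe (Vᵀ) Δ (by norm_num : (0:ℝ) ≤ 1) hVtn (le_refl _)
    simpa using this
  have hCC : ‖C * Cᵀ‖ ≤ η^2 * (‖Δ‖ * ((σ1+2*D) * ‖Δ‖)) := by
    have hid : C * Cᵀ = (η*η) • ((Vᵀ * Δ) * ((F * Fᵀ) * (Δ * V))) := by
      rw [hCdef, hCt, Matrix.smul_mul, Matrix.mul_smul, smul_smul]
      congr 1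
      simp only [Matrix.mul_assoc]
    rw [hid, mySmulNorm (η*η) hη2, sq]
    apply mul_le_mul_of_nonneg_left _ hη2
    apply myMulNormLe _ _ hδ0 hVtΔ
    apply myMulNormLe _ _ (by linarith only [hσ1pos, hD0]) hc hΔV
  -- ==== the contraction bound on ‖A Aᵀ‖ ====
  have hWsymm : Wᵀ = W := by
    rw [hWdef]
    simp [Matrix.transpose_sub, Matrix.transpose_one, Matrix.transpose_smul,
      Matrix.transpose_mul, Matrix.transpose_transpose]
  have hAA : ‖A * Aᵀ‖ ≤ D - 1.9*η*D^2 := by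
    have hβnn : (0:ℝ) ≤ D - 1.9*η*D^2 := by
      nlinarith only [mul_le_mul_of_nonneg_left hηD hD0, hD0]
    apply myNormLeOfForm
    · conv_lhs => rw [Matrix.transpose_mul, Matrix.transpose_transpose]
    · intro z
      rw [← Matrix.mulVec_mulVec, myDotShift]
      exact myDotSelfNonneg _
    · exact hβnn
    · intro x
      have e0 : x ⬝ᵥ ((A * Aᵀ) *ᵥ x) = (Aᵀ *ᵥ x) ⬝ᵥ (Aᵀ *ᵥ x) := by
        rw [← Matrix.mulVec_mulVec, myDotShift]
      set y : Fin k → ℝ := Tᵀ *ᵥ x with hy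
      set u : Fin d → ℝ := F *ᵥ y with hu
      set w : Fin k → ℝ := Fᵀ *ᵥ u with hwv
      set zz : Fin (d-r) → ℝ := T *ᵥ y with hzz
      have eAt : Aᵀ *ᵥ x = W *ᵥ y := by
        conv_lhs => rw [hAdef, Matrix.transpose_mul, hWsymm, ← Matrix.mulVec_mulVec]
      have eWy : W *ᵥ y = y - η • w := by
        rw [hWdef, myWvec]
      have hyw : y ⬝ᵥ w = u ⬝ᵥ u := by
        rw [hwv, myDotShift, Matrix.transpose_transpose]
      have hwy : w ⬝ᵥ y = u ⬝ᵥ u := by rw [dotProduct_comm, hyw]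
      have e1 : (W *ᵥ y) ⬝ᵥ (W *ᵥ y)
          = y ⬝ᵥ y - 2*η*(u ⬝ᵥ u) + η^2*(w ⬝ᵥ w) := by
        rw [eWy]
        simp only [sub_dotProduct, dotProduct_sub, smul_dotProduct,
          dotProduct_smul, smul_eq_mul]
        rw [hyw, hwy]
        ring
      -- bound w⬝w
      have hwu : w ⬝ᵥ w ≤ ‖F * Fᵀ‖ * (u ⬝ᵥ u) := by
        have h := myMulVecDotLe (Fᵀ) u
        rw [myNormTranspose, ← hFn2] at h
        exact h
      have huu0 : (0:ℝ) ≤ u ⬝ᵥ u := myDotSelfNonneg u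
      have hzz0 : (0:ℝ) ≤ zz ⬝ᵥ zz := myDotSelfNonneg zz
      -- u⬝u ≥ zz⬝zz
      have e2 : zz ⬝ᵥ zz ≤ u ⬝ᵥ u := by
        have h1 : y ⬝ᵥ ((Fᵀ * F) *ᵥ y) = u ⬝ᵥ u := by
          rw [← Matrix.mulVec_mulVec, myDotShift, Matrix.transpose_transpose, ← hu]
        have h2 : y ⬝ᵥ ((Sᵀ * S) *ᵥ y) = (S *ᵥ y) ⬝ᵥ (S *ᵥ y) := by
          rw [← Matrix.mulVec_mulVec, myDotShift, Matrix.transpose_transpose]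
        have h3 : y ⬝ᵥ ((Tᵀ * T) *ᵥ y) = zz ⬝ᵥ zz := by
          rw [← Matrix.mulVec_mulVec, myDotShift, Matrix.transpose_transpose, ← hzz]
        have h4 : y ⬝ᵥ ((Fᵀ * F) *ᵥ y)
            = y ⬝ᵥ ((Sᵀ * S) *ᵥ y) + y ⬝ᵥ ((Tᵀ * T) *ᵥ y) := by
          rw [hFtF, Matrix.add_mulVec, dotProduct_add]
        have h5 := myDotSelfNonneg (S *ᵥ y)
        rw [h1, h2, h3] at h4
        linarith
      -- m and CS
      set m : ℝ := y ⬝ᵥ y with hm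
      have hm0 : (0:ℝ) ≤ m := myDotSelfNonneg y
      have hmx : m = x ⬝ᵥ ((T * Tᵀ) *ᵥ x) := by
        rw [← Matrix.mulVec_mulVec, myDotShift, ← hy]
      have hmzz : (T * Tᵀ) *ᵥ x = zz := by
        rw [hzz, hy, Matrix.mulVec_mulVec]
      have hms : m ≤ D * (x ⬝ᵥ x) := by
        rw [hmx]
        calc x ⬝ᵥ ((T * Tᵀ) *ᵥ x) ≤ ‖T * Tᵀ‖ * (x ⬝ᵥ x) := myQuadLeNorm _ _
          _ ≤ D * (x ⬝ᵥ x) := mul_le_mul_of_nonneg_right htD (myDotSelfNonneg x)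
      have hcs : m^2 ≤ (x ⬝ᵥ x) * (zz ⬝ᵥ zz) := by
        have := myDotCS x zz
        rw [hmx, hmzz]
        exact this
      -- put it together
      have s1 : η^2*(w ⬝ᵥ w) ≤ η^2*(‖F * Fᵀ‖*(u ⬝ᵥ u)) :=
        mul_le_mul_of_nonneg_left hwu (by positivity)
      have s2 : η^2*(‖F * Fᵀ‖*(u ⬝ᵥ u)) ≤ 0.1*η*(u ⬝ᵥ u) := by
        nlinarith only [mul_le_mul_of_nonneg_right hηc (mul_nonneg hη0 huu0)]
      have s4 : y ⬝ᵥ y - 2*η*(u ⬝ᵥ u) + η^2*(w ⬝ᵥ w) ≤ m - 1.9*η*(zz ⬝ᵥ zz) := by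
        have : -1.9*η*(u ⬝ᵥ u) ≤ -1.9*η*(zz ⬝ᵥ zz) := by
          nlinarith only [mul_le_mul_of_nonneg_left e2 hη0]
        have hrest : -2*η*(u ⬝ᵥ u) + η^2*(w ⬝ᵥ w) ≤ -1.9*η*(u ⬝ᵥ u) := by
          linarith only [s1, s2]
        rw [hm]
        linarith only [this, hrest]
      have hfinal := myContraction η D m (x ⬝ᵥ x) (zz ⬝ᵥ zz) hηpos hD0 hηD hm0 hms
        (myDotSelfNonneg x) hzz0 hcs
      rw [e0, eAt, e1]
      linarith only [s4, hfinal]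
  -- ==== assemble the nine terms ====
  have h9 : ‖Tp * Tpᵀ‖ ≤ ‖A*Aᵀ‖ + ‖A*Bᵀ‖ + ‖B*Aᵀ‖ + ‖B*Bᵀ‖ + ‖A*Cᵀ‖ + ‖C*Aᵀ‖
      + ‖B*Cᵀ‖ + ‖C*Bᵀ‖ + ‖C*Cᵀ‖ := by
    rw [hexp]
    have n1 := norm_add_le (A*Aᵀ + A*Bᵀ + B*Aᵀ + B*Bᵀ - A*Cᵀ - C*Aᵀ - B*Cᵀ - C*Bᵀ) (C*Cᵀ)
    have n2 := norm_sub_le (A*Aᵀ + A*Bᵀ + B*Aᵀ + B*Bᵀ - A*Cᵀ - C*Aᵀ - B*Cᵀ) (C*Bᵀ)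
    have n3 := norm_sub_le (A*Aᵀ + A*Bᵀ + B*Aᵀ + B*Bᵀ - A*Cᵀ - C*Aᵀ) (B*Cᵀ)
    have n4 := norm_sub_le (A*Aᵀ + A*Bᵀ + B*Aᵀ + B*Bᵀ - A*Cᵀ) (C*Aᵀ)
    have n5 := norm_sub_le (A*Aᵀ + A*Bᵀ + B*Aᵀ + B*Bᵀ) (A*Cᵀ)
    have n6 := norm_add_le (A*Aᵀ + A*Bᵀ + B*Aᵀ) (B*Bᵀ)
    have n7 := norm_add_le (A*Aᵀ + A*Bᵀ) (B*Aᵀ)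
    have n8 := norm_add_le (A*Aᵀ) (A*Bᵀ)
    linarith only [n1, n2, n3, n4, n5, n6, n7, n8]
  have htotal : ‖Tp * Tpᵀ‖ ≤ (D - 1.9*η*D^2) + 2*(η*(D*ε)) + 2*(η*(2*D*‖Δ‖))
      + η^2*(ε*D*ε) + 2*(η^2*(ε*(2*D*‖Δ‖))) + η^2*(‖Δ‖*((σ1+2*D)*‖Δ‖)) := by
    linarith only [h9, hAA, hAB, hBA, hBB, hAC, hCA, hBC, hCB, hCC]
  -- ==== scalar endgame ====
  have hgbound : η*‖Δ‖ ≤ (η*D)/100 + 4*(η*ε) := by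
    have h1 : η*‖Δ‖ ≤ η*(η*σr*D + 4*ε) := mul_le_mul_of_nonneg_left hΔ hη0
    have h2 : η*(η*σr*D) ≤ (η*D)/100 := by
      nlinarith only [mul_le_mul_of_nonneg_right hησr (mul_nonneg hη0 hD0)]
    linarith only [h1, h2]
  have hkey := myScalarFinal (η*D) (η*ε) (η*‖Δ‖) (mul_nonneg hη0 hD0) hηD
    (mul_nonneg hη0 hε0) hηε (mul_nonneg hη0 hδ0) hgbound
  have hfin : (D - 1.9*η*D^2) + 2*(η*(D*ε)) + 2*(η*(2*D*‖Δ‖)) + η^2*(ε*D*ε)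
      + 2*(η^2*(ε*(2*D*‖Δ‖))) + η^2*(‖Δ‖*((σ1+2*D)*‖Δ‖))
      ≤ (1 - 0.9*η*D)*D + (0.16*ε + 19*D)*η*ε := by
    have hmul : η * ((D - 1.9*η*D^2) + 2*(η*(D*ε)) + 2*(η*(2*D*‖Δ‖)) + η^2*(ε*D*ε)
        + 2*(η^2*(ε*(2*D*‖Δ‖))) + η^2*(‖Δ‖*((σ1+2*D)*‖Δ‖)))
        ≤ η * ((1 - 0.9*η*D)*D + (0.16*ε + 19*D)*η*ε) := by
      have lhs_eq : η * ((D - 1.9*η*D^2) + 2*(η*(D*ε)) + 2*(η*(2*D*‖Δ‖)) + η^2*(ε*D*ε)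
          + 2*(η^2*(ε*(2*D*‖Δ‖))) + η^2*(‖Δ‖*((σ1+2*D)*‖Δ‖)))
          = (η*D) - 1.9*(η*D)^2 + (2*(η*D)*(η*ε) + 4*(η*D)*(η*‖Δ‖) + (η*D)*(η*ε)^2
          + 4*(η*D)*(η*ε)*(η*‖Δ‖) + (1/100 + 2*(η*D))*(η*‖Δ‖)^2) := by
        linear_combination (η^2*‖Δ‖^2) * hησ1
      have rhs_eq : η * ((1 - 0.9*η*D)*D + (0.16*ε + 19*D)*η*ε)
          = (η*D) - 0.9*(η*D)^2 + (0.16*(η*ε)^2 + 19*(η*D)*(η*ε)) := by ring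
      rw [lhs_eq, rhs_eq]
      linarith only [hkey]
    exact le_of_mul_le_mul_left hmul hηpos
  linarith only [htotal, hfin]
end
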